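/- Let T = (g, h, ρ) be an abelian type. If either (i) h is a torus, or (ii) h is p-nilpotent and g is a torus, then T is permissible. -/

import Mathlib

set_option linter.unusedSectionVars false

open scoped TensorProduct

attribute [local instance 100] LieRing.ofAssociativeRing

namespace PD

/-- An abelian restricted Lie algebra over `k` (of characteristic `p`): an abelian Lie
algebra (trivial bracket) together with its restricted `p`-th power map, which for an
abelian Lie algebra is additive and Frobenius-semilinear. -/
class AbRes (p : ℕ) (k : Type) (V : Type) [Field k] [AddCommGroup V] [Module k V] :
    Type where
  pMap : V → V
  pMap_add : ∀ x y : V, pMap (x + y) = pMap x + pMap y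
  pMap_smul : ∀ (a : k) (x : V), pMap (a • x) = a ^ p • pMap x

/-- Type synonym equipping a module with its trivial (abelian) Lie algebra structure. -/
def Ab (V : Type) : Type := V

instance (V : Type) [AddCommGroup V] : AddCommGroup (Ab V) := inferInstanceAs (AddCommGroup V)

instance (k V : Type) [Field k] [AddCommGroup V] [Module k V] : Module k (Ab V) :=
  inferInstanceAs (Module k V)

instance (V : Type) [AddCommGroup V] : LieRing (Ab V) :=
  { (inferInstanceAs (AddCommGroup (Ab V)) : AddCommGroup (Ab V)) with
    bracket := fun _ _ => 0
    add_lie := by intros; simp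
    lie_add := by intros; simp
    lie_self := by intros; rfl
    leibniz_lie := by intros; simp }

instance (k V : Type) [Field k] [AddCommGroup V] [Module k V] : LieAlgebra k (Ab V) :=
  { (inferInstanceAs (Module k (Ab V)) : Module k (Ab V)) with
    lie_smul := by intros; show (0 : Ab V) = _ • (0 : Ab V); simp }

/-- The identity of `V`, viewed as a linear equivalence `V ≃ Ab V`. -/
def toAb (k V : Type) [Field k] [AddCommGroup V] [Module k V] : V ≃ₗ[k] Ab V :=
  LinearEquiv.refl k V

section Core

variable (p : ℕ) [Fact (Nat.Prime p)] (k : Type) [Field k] [CharP k p]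
variable (V : Type) [AddCommGroup V] [Module k V]
variable [AbRes p k V]

/-- The relation defining `u(h) = U(h)/(x^p - x^{[p]})`. -/
def uRel : UniversalEnvelopingAlgebra k (Ab V) → UniversalEnvelopingAlgebra k (Ab V) → Prop :=
  fun a b => ∃ x : V,
    a = (UniversalEnvelopingAlgebra.ι k (toAb k V x) : UniversalEnvelopingAlgebra k (Ab V)) ^ p ∧
    b = UniversalEnvelopingAlgebra.ι k (toAb k V (AbRes.pMap (p := p) (k := k) x))

/-- The restricted universal enveloping algebra `u(h) := U(h)/(x^p − x^{[p]}, x ∈ h)`. -/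
abbrev uRes : Type := RingQuot (uRel p k V)

/-- The canonical linear map `h → u(h)`. -/
noncomputable def mkι : V →ₗ[k] uRes p k V :=
  (RingQuot.mkAlgHom k (uRel p k V)).toLinearMap.comp
    ((UniversalEnvelopingAlgebra.ι k).toLinearMap.comp (toAb k V).toLinearMap)

lemma uea_comm (a b : Ab V) :
    (UniversalEnvelopingAlgebra.ι k a : UniversalEnvelopingAlgebra k (Ab V)) *
      UniversalEnvelopingAlgebra.ι k b =
    UniversalEnvelopingAlgebra.ι k b * UniversalEnvelopingAlgebra.ι k a := by
  have h := (UniversalEnvelopingAlgebra.ι (R := k) (L := Ab V)).map_lie a b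
  rw [show ⁅a, b⁆ = (0 : Ab V) from rfl, map_zero,
    LieRing.of_associative_ring_bracket] at h
  exact sub_eq_zero.1 h.symm

lemma mkι_comm (x y : V) : mkι p k V x * mkι p k V y = mkι p k V y * mkι p k V x := by
  show (RingQuot.mkAlgHom k (uRel p k V)) (UniversalEnvelopingAlgebra.ι k (toAb k V x)) *
      (RingQuot.mkAlgHom k (uRel p k V)) (UniversalEnvelopingAlgebra.ι k (toAb k V y)) = _
  rw [← map_mul (RingQuot.mkAlgHom k (uRel p k V)), uea_comm, map_mul]
  rfl

lemma mkι_pow (x : V) :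
    mkι p k V x ^ p = mkι p k V (AbRes.pMap (p := p) (k := k) x) := by
  show (RingQuot.mkAlgHom k (uRel p k V)) (UniversalEnvelopingAlgebra.ι k (toAb k V x)) ^ p = _
  rw [← map_pow]
  exact RingQuot.mkAlgHom_rel k ⟨x, rfl, rfl⟩

/-- Freshman's dream in any `k`-algebra (`k` of characteristic `p`), for commuting
elements. -/
lemma add_pow_charP {A : Type} [Ring A] [Algebra k A] {x y : A} (h : Commute x y) :
    (x + y) ^ p = x ^ p + y ^ p := by
  obtain ⟨r, hr⟩ := h.exists_add_pow_prime_eq (Fact.out : Nat.Prime p)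
  have hp0 : ((p : ℕ) : A) = 0 := by
    rw [← map_natCast (algebraMap k A) p, CharP.cast_eq_zero k p, map_zero]
  rw [hr, hp0]
  simp only [zero_mul, add_zero]

/-- Build a Lie algebra morphism (for the trivial bracket on `V`) from a linear map with
pairwise commuting images. -/
noncomputable def lieHomOfLinear {A : Type} [Ring A] [Algebra k A] (f : V →ₗ[k] A)
    (hf : ∀ x y : V, f x * f y = f y * f x) : Ab V →ₗ⁅k⁆ A :=
  { toLinearMap := f.comp (toAb k V).symm.toLinearMap
    map_lie' := by
      intro x y
      show f.comp (toAb k V).symm.toLinearMap ((0 : Ab V)) = ⁅_, _⁆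
      rw [LieRing.of_associative_ring_bracket]
      simp only [map_zero]
      exact (sub_eq_zero.2 (hf _ _)).symm }

/-- The universal property of `u(h)`: a linear map `f : h → A` with commuting images
satisfying `f(x)^p = f(x^{[p]})` extends to an algebra map `u(h) → A`. -/
noncomputable def extendAlg {A : Type} [Ring A] [Algebra k A] (f : V →ₗ[k] A)
    (hf : ∀ x y : V, f x * f y = f y * f x)
    (hp : ∀ x : V, f x ^ p = f (AbRes.pMap (p := p) (k := k) x)) :
    uRes p k V →ₐ[k] A :=
  RingQuot.liftAlgHom k
    ⟨UniversalEnvelopingAlgebra.lift k (lieHomOfLinear (k := k) (V := V) f hf), by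
      rintro a b ⟨x, rfl, rfl⟩
      simp only [map_pow, UniversalEnvelopingAlgebra.lift_ι_apply]
      exact hp x⟩

@[simp] lemma extendAlg_mkι {A : Type} [Ring A] [Algebra k A] (f : V →ₗ[k] A)
    (hf : ∀ x y : V, f x * f y = f y * f x)
    (hp : ∀ x : V, f x ^ p = f (AbRes.pMap (p := p) (k := k) x)) (x : V) :
    extendAlg p k V f hf hp (mkι p k V x) = f x := by
  show RingQuot.liftAlgHom k _
    ((RingQuot.mkAlgHom k (uRel p k V)) (UniversalEnvelopingAlgebra.ι k (toAb k V x))) = f x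
  rw [RingQuot.liftAlgHom_mkAlgHom_apply, UniversalEnvelopingAlgebra.lift_ι_apply]
  rfl

/-- The counit `ε : u(h) → k`. -/
noncomputable def counit : uRes p k V →ₐ[k] k :=
  extendAlg p k V (0 : V →ₗ[k] k) (by intros; simp) (by
    intro x
    simp [zero_pow (Nat.Prime.ne_zero (Fact.out : Nat.Prime p))])

/-- The augmentation ideal `u(h)⁺`, as a submodule. -/
noncomputable def Aplus : Submodule k (uRes p k V) :=
  LinearMap.ker (counit p k V).toLinearMap

/-- `(u(h)⁺)^{⊗2}` viewed inside `u(h) ⊗ u(h)`. -/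
noncomputable def AplusSq : Submodule k (uRes p k V ⊗[k] uRes p k V) :=
  Submodule.map₂ (TensorProduct.mk k (uRes p k V) (uRes p k V)) (Aplus p k V) (Aplus p k V)

/-- The comultiplication `Δ : u(h) → u(h) ⊗ u(h)`, the algebra map making every element
of `h` primitive. -/
noncomputable def comul : uRes p k V →ₐ[k] uRes p k V ⊗[k] uRes p k V :=
  extendAlg p k V
    (((TensorProduct.mk k (uRes p k V) (uRes p k V)).flip 1).comp (mkι p k V)
      + (TensorProduct.mk k (uRes p k V) (uRes p k V) 1).comp (mkι p k V))
    (by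
      intro x y
      simp only [LinearMap.add_apply, LinearMap.coe_comp, Function.comp_apply,
        TensorProduct.mk_apply, LinearMap.flip_apply]
      simp only [add_mul, mul_add, Algebra.TensorProduct.tmul_mul_tmul, one_mul, mul_one,
        mkι_comm p k V x y]
      abel)
    (by
      intro x
      simp only [LinearMap.add_apply, LinearMap.coe_comp, Function.comp_apply,
        TensorProduct.mk_apply, LinearMap.flip_apply]
      have hc : Commute ((mkι p k V x) ⊗ₜ[k] (1 : uRes p k V))
          ((1 : uRes p k V) ⊗ₜ[k] (mkι p k V x)) := by
        unfold Commute SemiconjBy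
        simp [Algebra.TensorProduct.tmul_mul_tmul]
      rw [add_pow_charP p k hc, Algebra.TensorProduct.tmul_pow, Algebra.TensorProduct.tmul_pow,
        one_pow, mkι_pow])

/-- The first cobar differential `∂¹(r) = 1 ⊗ r − Δ(r) + r ⊗ 1`. -/
noncomputable def d1 : uRes p k V →ₗ[k] uRes p k V ⊗[k] uRes p k V :=
  TensorProduct.mk k (uRes p k V) (uRes p k V) 1 - (comul p k V).toLinearMap
    + (TensorProduct.mk k (uRes p k V) (uRes p k V)).flip 1

/-- The second cobar differential `∂²(r ⊗ s) = 1 ⊗ r ⊗ s − Δ(r) ⊗ s + r ⊗ Δ(s) − r ⊗ s ⊗ 1`. -/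
noncomputable def d2 : uRes p k V ⊗[k] uRes p k V →ₗ[k]
    uRes p k V ⊗[k] (uRes p k V ⊗[k] uRes p k V) :=
  TensorProduct.mk k (uRes p k V) (uRes p k V ⊗[k] uRes p k V) 1
    - (TensorProduct.assoc k (uRes p k V) (uRes p k V) (uRes p k V)).toLinearMap.comp
        (LinearMap.rTensor (uRes p k V) (comul p k V).toLinearMap)
    + LinearMap.lTensor (uRes p k V) (comul p k V).toLinearMap
    - (TensorProduct.assoc k (uRes p k V) (uRes p k V) (uRes p k V)).toLinearMap.comp
        ((TensorProduct.mk k (uRes p k V ⊗[k] uRes p k V) (uRes p k V)).flip 1)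

/-- The element `ω(r) = ∑_{i=1}^{p−1} ((p−1)!/(i!(p−i)!)) rⁱ ⊗ r^{p−i}`. -/
noncomputable def omega (r : uRes p k V) : uRes p k V ⊗[k] uRes p k V :=
  ∑ i ∈ Finset.Ico 1 p,
    ((Nat.factorial (p-1) / (Nat.factorial i * Nat.factorial (p - i)) : ℕ) : k) •
      ((r ^ i) ⊗ₜ[k] (r ^ (p - i)))

/-- The extension of `ρ_z : h → h` (with `ρ_z ∘ [p] = 0`) to a derivation of `u(h)`,
constructed through the trivial square-zero extension. -/
noncomputable def Dres (f : V →ₗ[k] V)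
    (hf : ∀ x : V, f (AbRes.pMap (p := p) (k := k) x) = 0) :
    uRes p k V →ₗ[k] uRes p k V :=
  ((TrivSqZeroExt.sndHom (uRes p k V) (uRes p k V)).restrictScalars k).comp
    (extendAlg p k V
      ({ toFun := fun x => TrivSqZeroExt.inl (mkι p k V x)
              + TrivSqZeroExt.inr (mkι p k V (f x))
         map_add' := by
          intro x y
          simp only [map_add, TrivSqZeroExt.inl_add, TrivSqZeroExt.inr_add]
          abel
         map_smul' := by
          intro c x
          simp only [map_smul, TrivSqZeroExt.inl_smul, TrivSqZeroExt.inr_smul, smul_add,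
            RingHom.id_apply] } : V →ₗ[k] TrivSqZeroExt (uRes p k V) (uRes p k V))
      (by
        intro x y
        simp only [LinearMap.coe_mk, AddHom.coe_mk]
        simp only [add_mul, mul_add, TrivSqZeroExt.inl_mul_inl, TrivSqZeroExt.inl_mul_inr,
          TrivSqZeroExt.inr_mul_inl, TrivSqZeroExt.inr_mul_inr, smul_eq_mul,
          MulOpposite.smul_eq_mul_unop, MulOpposite.unop_op]
        rw [mkι_comm p k V x y, mkι_comm p k V x (f y), mkι_comm p k V (f x) y]
        abel
      )
      (by
        intro x
        simp only [LinearMap.coe_mk, AddHom.coe_mk]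
        have hc : Commute
            (TrivSqZeroExt.inl (mkι p k V x) : TrivSqZeroExt (uRes p k V) (uRes p k V))
            (TrivSqZeroExt.inr (mkι p k V (f x))) := by
          unfold Commute SemiconjBy
          rw [TrivSqZeroExt.inl_mul_inr, TrivSqZeroExt.inr_mul_inl, smul_eq_mul,
            MulOpposite.smul_eq_mul_unop, MulOpposite.unop_op, mkι_comm]
        rw [add_pow_charP p k hc]
        have h2 : (TrivSqZeroExt.inr (mkι p k V (f x)) :
            TrivSqZeroExt (uRes p k V) (uRes p k V)) ^ p = 0 := by
          have h2' : (TrivSqZeroExt.inr (mkι p k V (f x)) :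
              TrivSqZeroExt (uRes p k V) (uRes p k V)) ^ 2 = 0 := by
            rw [sq, TrivSqZeroExt.inr_mul_inr]
          have hle : 2 + (p - 2) = p := by
            have := (Fact.out : Nat.Prime p).two_le
            omega
          have hv : (TrivSqZeroExt.inr (mkι p k V (f x)) :
              TrivSqZeroExt (uRes p k V) (uRes p k V)) ^ p
              = (TrivSqZeroExt.inr (mkι p k V (f x)) :
              TrivSqZeroExt (uRes p k V) (uRes p k V)) ^ (2 + (p - 2)) := by rw [hle]
          rw [hv, pow_add, h2', zero_mul]
        have h3 : (TrivSqZeroExt.inl (mkι p k V x) :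
            TrivSqZeroExt (uRes p k V) (uRes p k V)) ^ p
            = TrivSqZeroExt.inl ((mkι p k V x) ^ p) :=
          (map_pow (TrivSqZeroExt.inlHom (uRes p k V) (uRes p k V)) (mkι p k V x) p).symm
        rw [h2, add_zero, h3, mkι_pow, hf x, map_zero, TrivSqZeroExt.inr_zero, add_zero]
      )).toLinearMap

/-- The action of `ρ_z` on `u(h) ⊗ u(h)`, i.e. `ρ ⊗ 1 + 1 ⊗ ρ`. -/
noncomputable def Dtens (f : V →ₗ[k] V)
    (hf : ∀ x : V, f (AbRes.pMap (p := p) (k := k) x) = 0) :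
    uRes p k V ⊗[k] uRes p k V →ₗ[k] uRes p k V ⊗[k] uRes p k V :=
  LinearMap.rTensor (uRes p k V) (Dres p k V f hf)
    + LinearMap.lTensor (uRes p k V) (Dres p k V f hf)

/-- `Φ_z` in (cobar) degree 1: `Φ_z(r) = r^p − λ r + ρ_z^{p−1}(r)`. -/
noncomputable def Phi1 (lam : k) (f : V →ₗ[k] V)
    (hf : ∀ x : V, f (AbRes.pMap (p := p) (k := k) x) = 0) (r : uRes p k V) : uRes p k V :=
  r ^ p - lam • r + ((Dres p k V f hf) ^ (p - 1) : uRes p k V →ₗ[k] uRes p k V) r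

/-- `Φ_z` in (cobar) degree 2: `Φ_z(χ) = χ^p − λ χ + (ρ_z ⊗ 1 + 1 ⊗ ρ_z)^{p−1}(χ)`,
the `p`-th power being the one of the ring `u(h) ⊗ u(h)`. -/
noncomputable def Phi2 (lam : k) (f : V →ₗ[k] V)
    (hf : ∀ x : V, f (AbRes.pMap (p := p) (k := k) x) = 0)
    (χ : uRes p k V ⊗[k] uRes p k V) : uRes p k V ⊗[k] uRes p k V :=
  χ ^ p - lam • χ
    + ((Dtens p k V f hf) ^ (p - 1) :
        uRes p k V ⊗[k] uRes p k V →ₗ[k] uRes p k V ⊗[k] uRes p k V) χ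

end Core

section Rep

variable (p : ℕ) [Fact (Nat.Prime p)] (k : Type) [Field k] [CharP k p]
variable {G V : Type} [AddCommGroup G] [Module k G] [AddCommGroup V] [Module k V]
variable [AbRes p k G] [AbRes p k V]

/-- An algebraic representation of the abelian restricted Lie algebra `g` on the abelian
restricted Lie algebra `h` (conditions (i)–(iv) of the definition of an algebraic
representation, specialized to abelian restricted Lie algebras: condition (iii) is then
vacuous, and in condition (iv) the right-hand side vanishes). -/
structure IsAlgebraicRep (ρ : G →ₗ[k] Module.End k V) : Prop where
  comm : ∀ x y : G, ρ x * ρ y = ρ y * ρ x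
  map_pMap : ∀ x : G, ρ (AbRes.pMap (p := p) (k := k) x) = ρ x ^ p
  annih : ∀ (x : G) (a : V), ρ x (AbRes.pMap (p := p) (k := k) a) = 0

end Rep


section More

variable (p : ℕ) [Fact (Nat.Prime p)] (k : Type) [Field k] [CharP k p]
variable (V : Type) [AddCommGroup V] [Module k V] [AbRes p k V]

/-- The functorial extension of a linear map of abelian restricted Lie algebras commuting
with the restricted maps, to an algebra map `u(h) → u(h')` (a morphism of Hopf algebras). -/
noncomputable def uResMap (W : Type) [AddCommGroup W] [Module k W] [AbRes p k W]
    (f : V →ₗ[k] W)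
    (hcompat : ∀ x : V, f (AbRes.pMap (p := p) (k := k) x)
      = AbRes.pMap (p := p) (k := k) (f x)) : uRes p k V →ₐ[k] uRes p k W :=
  extendAlg p k V ((mkι p k W).comp f) (fun x y => mkι_comm p k W (f x) (f y))
    (fun x => by
      simp only [LinearMap.coe_comp, Function.comp_apply]
      rw [mkι_pow, hcompat])

/-- `Φ_z` restricted to `h ⊆ u(h)`: `Φ_z(r) = r^{[p]} − λ r + ρ_z^{p−1}(r)`
(for `r ∈ h` one has `r^p = r^{[p]}` in `u(h)`). -/
noncomputable def PhiV (lam : k) (f : Module.End k V) : V → V :=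
  fun r => AbRes.pMap (p := p) (k := k) r - lam • r + (f ^ (p - 1)) r

/-- The abelian type determined by `ρ_z = f` and `z^{[p]} = λ z` is *permissible* if
`Ker ρ_z = Im Φ_z` on `h`. -/
noncomputable def Permissible (lam : k) (f : Module.End k V) : Prop :=
  {r : V | f r = 0} = Set.range (PhiV p k V lam f)

end More

section Iso

variable (p : ℕ) (k : Type) [Field k]

/-- An isomorphism of (abelian) restricted Lie algebras: a linear equivalence commuting
with the restricted maps. -/
structure RestrictedLieIso (V W : Type) [AddCommGroup V] [Module k V] [AddCommGroup W]
    [Module k W] [AbRes p k V] [AbRes p k W] extends V ≃ₗ[k] W where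
  map_pMap : ∀ x : V, toLinearEquiv (AbRes.pMap (p := p) (k := k) x)
    = AbRes.pMap (p := p) (k := k) (toLinearEquiv x)

/-- An isomorphism of abelian types `T = (g, h, ρ) → T' = (g', h', ρ')` : a pair
`(φ₁ : g' → g, φ₂ : h → h')` of restricted Lie algebra isomorphisms intertwining `ρ`
and `ρ'`. -/
structure AbTypeIso {G V G' V' : Type}
    [AddCommGroup G] [Module k G] [AddCommGroup V] [Module k V]
    [AddCommGroup G'] [Module k G'] [AddCommGroup V'] [Module k V']
    [AbRes p k G] [AbRes p k V] [AbRes p k G'] [AbRes p k V']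
    (ρ : G →ₗ[k] Module.End k V) (ρ' : G' →ₗ[k] Module.End k V') where
  e1 : RestrictedLieIso p k G' G
  e2 : RestrictedLieIso p k V V'
  compat : ∀ (x' : G') (a : V),
    e2.toLinearEquiv (ρ (e1.toLinearEquiv x') a) = ρ' x' (e2.toLinearEquiv a)

end Iso

section Hopf

variable (k : Type) [Field k]

/-- The primitive space `P(H)` of a bialgebra `H`. -/
noncomputable def primSpace (H : Type) [Ring H] [Bialgebra k H] : Submodule k H where
  carrier := {x : H | Coalgebra.comul (R := k) x = x ⊗ₜ[k] (1 : H) + (1 : H) ⊗ₜ[k] x}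
  add_mem' := by
    intro a b ha hb
    simp only [Set.mem_setOf_eq] at *
    rw [map_add, ha, hb, TensorProduct.add_tmul, TensorProduct.tmul_add]
    abel
  zero_mem' := by simp
  smul_mem' := by
    intro c x hx
    simp only [Set.mem_setOf_eq] at *
    rw [map_smul, hx, smul_add, TensorProduct.smul_tmul', ← TensorProduct.tmul_smul]

/-- A subcoalgebra of a bialgebra, as a submodule `C` with `Δ(C) ⊆ C ⊗ C`. -/
def IsSubcoalgebra (H : Type) [Ring H] [Bialgebra k H] (C : Submodule k H) : Prop :=
  ∀ x ∈ C, Coalgebra.comul (R := k) x ∈ Submodule.map₂ (TensorProduct.mk k H H) C C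

/-- A simple subcoalgebra: a nonzero subcoalgebra with no nonzero proper subcoalgebras. -/
def IsSimpleSubcoalgebra (H : Type) [Ring H] [Bialgebra k H] (C : Submodule k H) : Prop :=
  C ≠ ⊥ ∧ IsSubcoalgebra k H C ∧
    ∀ D ≤ C, IsSubcoalgebra k H D → D = ⊥ ∨ D = C

/-- The coradical of a bialgebra: the sum of all its simple subcoalgebras. -/
noncomputable def coradical (H : Type) [Ring H] [Bialgebra k H] : Submodule k H :=
  sSup {C | IsSimpleSubcoalgebra k H C}

/-- A (finite-dimensional) bialgebra is connected if its coradical is one-dimensional. -/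
def IsConnectedCoalg (H : Type) [Ring H] [Bialgebra k H] : Prop :=
  Module.finrank k ↥(coradical k H) = 1

/-- An isomorphism of Hopf algebras: an algebra isomorphism compatible with the
comultiplications and the counits. -/
structure HopfAlgIso (H1 H2 : Type) [Ring H1] [Ring H2] [HopfAlgebra k H1]
    [HopfAlgebra k H2] extends H1 ≃ₐ[k] H2 where
  map_comul : ∀ a : H1, Coalgebra.comul (R := k) (toAlgEquiv a)
      = TensorProduct.map toAlgEquiv.toLinearMap toAlgEquiv.toLinearMap
          (Coalgebra.comul (R := k) a)
  map_counit : ∀ a : H1, Coalgebra.counit (R := k) (toAlgEquiv a) = Coalgebra.counit (R := k) a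

end Hopf

section Realization

variable (p : ℕ) [Fact (Nat.Prime p)] (k : Type) [Field k] [CharP k p]
variable (n : ℕ) (V : Type) [AddCommGroup V] [Module k V] [AbRes p k V]

/-- A realization of the primitive deformation `u_z(D)` of `u(T)` associated to a datum
`D = (T, Θ, χ)` and `0 ≠ z ∈ g` with `z^{[p]} = λ z`: a connected Hopf algebra `H` of
dimension `p^{n+1}` containing `u(h)` as a Hopf subalgebra and an element `Z` satisfying
the deformed relations `[Z, r] = ρ_z(r)`, `Z^p − λZ + Θ = 0`,
`Δ(Z) = Z ⊗ 1 + 1 ⊗ Z + χ`, generating `H` over `u(h)`, and whose primitive space is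
exactly (the image of) `h`.  Here `D : u(h) → u(h)` is the derivation extending `ρ_z`. -/
structure PDRealization (D : uRes p k V →ₗ[k] uRes p k V) (lam : k) (Θ : uRes p k V)
    (χ : uRes p k V ⊗[k] uRes p k V) : Type 1 where
  H : Type
  [ringH : Ring H]
  [hopfH : HopfAlgebra k H]
  findim : Module.finrank k H = p ^ (n + 1)
  connected : IsConnectedCoalg k H
  j : uRes p k V →ₐ[k] H
  j_inj : Function.Injective j
  j_comul : ∀ a : uRes p k V, Coalgebra.comul (R := k) (j a)
      = TensorProduct.map j.toLinearMap j.toLinearMap (comul p k V a)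
  j_counit : ∀ a : uRes p k V, Coalgebra.counit (R := k) (j a) = counit p k V a
  Z : H
  gen : Algebra.adjoin k (Set.range j ∪ {Z}) = ⊤
  commZ : ∀ a : uRes p k V, Z * j a - j a * Z = j (D a)
  powZ : Z ^ p - lam • Z + j Θ = 0
  comulZ : Coalgebra.comul (R := k) Z
      = Z ⊗ₜ[k] (1 : H) + (1 : H) ⊗ₜ[k] Z
        + TensorProduct.map j.toLinearMap j.toLinearMap χ
  prim : primSpace k H = Submodule.map (j.toLinearMap ∘ₗ mkι p k V) ⊤

/-- `D = (T, Θ, χ)` is a PD datum with respect to `z` (with `z^{[p]} = λz` and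
`D` the derivation of `u(h)` extending `ρ_z`) iff the corresponding primitive
deformation `u_z(D)` exists, i.e. is a `p^{n+1}`-dimensional connected Hopf algebra whose
primitive space is (isomorphic to) `h`. -/
def IsPDDatum (D : uRes p k V →ₗ[k] uRes p k V) (lam : k) (Θ : uRes p k V)
    (χ : uRes p k V ⊗[k] uRes p k V) : Prop :=
  Nonempty (PDRealization p k n V D lam Θ χ)

/-- Hopf algebra isomorphisms between (the underlying Hopf algebras of) two primitive
deformation realizations. -/
def RealIso {n' : ℕ} {V' : Type} [AddCommGroup V'] [Module k V'] [AbRes p k V']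
    {D : uRes p k V →ₗ[k] uRes p k V} {lam : k} {Θ : uRes p k V}
    {χ : uRes p k V ⊗[k] uRes p k V}
    {D' : uRes p k V' →ₗ[k] uRes p k V'} {lam' : k} {Θ' : uRes p k V'}
    {χ' : uRes p k V' ⊗[k] uRes p k V'}
    (R : PDRealization p k n V D lam Θ χ)
    (R' : PDRealization p k n' V' D' lam' Θ' χ') : Type :=
  letI := R.ringH; letI := R.hopfH; letI := R'.ringH; letI := R'.hopfH
  HopfAlgIso k R.H R'.H

end Realization

section Points

variable (p n : ℕ) [Fact (Nat.Prime p)] (k : Type) [Field k] [CharP k p]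
variable (V : Type) [AddCommGroup V] [Module k V] [AbRes p k V]

/-- Index set for the coordinates `a_{ij}`, `1 ≤ i < j ≤ n`. -/
abbrev UpperIdx (n : ℕ) : Type := {ij : Fin n × Fin n // ij.1 < ij.2}

/-- A point of the affine space `𝔸^{n(n+1)/2}`, with coordinates `(a_{ij}, b_k)`. -/
abbrev Pt (n : ℕ) (k : Type) : Type := (UpperIdx n → k) × (Fin n → k)

/-- The 2-cocycle `χ_P = ∑_{i<j} a_{ij} x_i ⊗ x_j + ω(∑_k b_k x_k)` associated to a point
`P ∈ 𝔸^{n(n+1)/2}` and a basis `x` of `h`. -/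
noncomputable def chiP (x : Module.Basis (Fin n) k V) (P : Pt n k) :
    uRes p k V ⊗[k] uRes p k V :=
  (∑ q : UpperIdx n,
      P.1 q • ((mkι p k V (x q.1.1)) ⊗ₜ[k] (mkι p k V (x q.1.2))))
    + omega p k V (mkι p k V (∑ j, P.2 j • x j))

/-- A point `P` is admissible w.r.t. the type `T` if there is `s ∈ u(h)⁺` with
`Φ_z(χ_P) = ∂¹(s)` and `ρ_z(s) = 0`. -/
noncomputable def IsAdmissible (lam : k) (f : V →ₗ[k] V)
    (hf : ∀ a : V, f (AbRes.pMap (p := p) (k := k) a) = 0)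
    (x : Module.Basis (Fin n) k V) (P : Pt n k) : Prop :=
  ∃ s ∈ Aplus p k V, Phi2 p k V lam f hf (chiP p n k V x P) = d1 p k V s
    ∧ Dres p k V f hf s = 0

/-- The characterization of PD data: `(T, Θ, χ)` is a PD datum w.r.t. `z` iff `χ` is a
2-cocycle which is not a 2-coboundary, `ρ_z(Θ) = 0` and `Φ_z(χ) = ∂¹(Θ)`. -/
noncomputable def IsPDDatumC (lam : k) (f : V →ₗ[k] V)
    (hf : ∀ a : V, f (AbRes.pMap (p := p) (k := k) a) = 0)
    (Θ : uRes p k V) (χ : uRes p k V ⊗[k] uRes p k V) : Prop :=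
  Θ ∈ Aplus p k V ∧ χ ∈ AplusSq p k V ∧ d2 p k V χ = 0 ∧
    (¬ ∃ s ∈ Aplus p k V, χ = d1 p k V s) ∧
    Dres p k V f hf Θ = 0 ∧ Phi2 p k V lam f hf χ = d1 p k V Θ

/-- The equivalence relation on PD data defining `ℋ²(T)`:
`(Θ, χ) ∼ (Θ', χ')` iff `Θ' − Θ = Φ_z(s)` and `χ' − χ = ∂¹(s)` for some `s ∈ u(h)⁺`. -/
noncomputable def PDEquiv (lam : k) (f : V →ₗ[k] V)
    (hf : ∀ a : V, f (AbRes.pMap (p := p) (k := k) a) = 0)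
    (d d' : uRes p k V × (uRes p k V ⊗[k] uRes p k V)) : Prop :=
  ∃ s ∈ Aplus p k V, d'.1 - d.1 = Phi1 p k V lam f hf s ∧ d'.2 - d.2 = d1 p k V s

/-- The action of an automorphism `φ = (γ, G) ∈ Aut(T)` on points of `𝔸^{n(n+1)/2}`:
`ã_{ij} = ∑_{r<s} γ(G_{ri}G_{sj} − G_{rj}G_{si}) a_{rs}`,
`b̃_k = ∑_s γ^{1/p} G_{sk} b_s`. -/
noncomputable def actPt [PerfectRing k p] (γ : k) (Gm : Matrix (Fin n) (Fin n) k)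
    (P : Pt n k) : Pt n k :=
  (fun q' => ∑ q : UpperIdx n,
      γ * (Gm q.1.1 q'.1.1 * Gm q.1.2 q'.1.2 - Gm q.1.1 q'.1.2 * Gm q.1.2 q'.1.1) * P.1 q,
   fun j => ∑ s : Fin n, (frobeniusEquiv k p).symm γ * Gm s j * P.2 s)

end Points

end PD

namespace PDAux

open PD Polynomial Finset

variable (p : ℕ) [Fact (Nat.Prime p)] (k : Type) [Field k] [CharP k p]
variable {V : Type} [AddCommGroup V] [Module k V] [AbRes p k V]

lemma pMap_zero : AbRes.pMap (p := p) (k := k) (0 : V) = 0 := by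
  have h := AbRes.pMap_smul (p := p) (k := k) (0 : k) (0 : V)
  rw [zero_smul, zero_pow (Nat.Prime.ne_zero (Fact.out : Nat.Prime p)), zero_smul] at h
  exact h

lemma pMap_sub (a b : V) :
    AbRes.pMap (p := p) (k := k) (a - b)
      = AbRes.pMap (p := p) (k := k) a - AbRes.pMap (p := p) (k := k) b := by
  have h := AbRes.pMap_add (p := p) (k := k) (a - b) b
  rw [sub_add_cancel] at h
  rw [h]; abel

lemma pMap_sum (s : Finset ℕ) (g : ℕ → k) (w : ℕ → V) :
    AbRes.pMap (p := p) (k := k) (∑ i ∈ s, g i • w i)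
      = ∑ i ∈ s, (g i ^ p) • AbRes.pMap (p := p) (k := k) (w i) := by
  classical
  induction s using Finset.induction with
  | empty => simp [pMap_zero p k]
  | insert _ _ h ih =>
      rw [Finset.sum_insert h, AbRes.pMap_add, AbRes.pMap_smul, ih, Finset.sum_insert h]

/-- Iterates of `pMap`. -/
noncomputable def Pit (v : V) : ℕ → V :=
  fun i => (fun a : V => AbRes.pMap (p := p) (k := k) a)^[i] v

lemma Pit_zero (v : V) : Pit p k v 0 = v := rfl

lemma Pit_succ (v : V) (i : ℕ) :
    Pit p k v (i + 1) = AbRes.pMap (p := p) (k := k) (Pit p k v i) :=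
  Function.iterate_succ_apply' _ i v

/-- The key verification lemma: given coefficients solving the relevant polynomial
system, produce a solution of `pMap r - lam • r = v`. -/
lemma solve (lam : k) (v : V) (m : ℕ) (hm : 1 ≤ m) (C x : ℕ → k)
    (hrel : ∑ i ∈ Finset.range m, C i • Pit p k v i = Pit p k v m)
    (hx0 : C 0 * x (m - 1) ^ p - lam * x 0 = 1)
    (hxi : ∀ i, i + 1 < m → x i ^ p + C (i + 1) * x (m - 1) ^ p - lam * x (i + 1) = 0) :
    ∃ r : V, AbRes.pMap (p := p) (k := k) r - lam • r = v := by
  obtain ⟨nn, rfl⟩ : ∃ nn, m = nn + 1 := ⟨m - 1, (Nat.succ_pred_eq_of_pos hm).symm⟩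
  have hm1 : nn + 1 - 1 = nn := rfl
  rw [hm1] at hx0 hxi
  refine ⟨∑ i ∈ Finset.range (nn + 1), x i • Pit p k v i, ?_⟩
  have hPr : AbRes.pMap (p := p) (k := k) (∑ i ∈ Finset.range (nn + 1), x i • Pit p k v i)
      = ∑ i ∈ Finset.range (nn + 1), (x i ^ p) • Pit p k v (i + 1) := by
    rw [pMap_sum p k]
    exact Finset.sum_congr rfl fun i _ => by rw [Pit_succ]
  rw [hPr, Finset.smul_sum]
  -- split off the top term of the first sum
  rw [Finset.sum_range_succ (fun i => (x i ^ p) • Pit p k v (i + 1)) nn, ← hrel,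
    Finset.smul_sum]
  -- rewrite the first partial sum with an index shift
  have hshift : (∑ i ∈ Finset.range nn, (x i ^ p) • Pit p k v (i + 1))
      = ∑ i ∈ Finset.range (nn + 1),
          (if i = 0 then (0 : V) else (x (i - 1) ^ p) • Pit p k v i) := by
    rw [Finset.sum_range_succ' (fun i => if i = 0 then (0 : V) else (x (i - 1) ^ p) • Pit p k v i) nn]
    simp
  rw [hshift, ← Finset.sum_add_distrib, ← Finset.sum_sub_distrib]
  have : ∀ i ∈ Finset.range (nn + 1),
      ((if i = 0 then (0 : V) else (x (i - 1) ^ p) • Pit p k v i)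
          + x nn ^ p • (C i • Pit p k v i)) - lam • (x i • Pit p k v i)
        = if i = 0 then v else 0 := by
    intro i hi
    rcases Nat.eq_zero_or_pos i with rfl | hipos
    · rw [if_pos rfl, if_pos rfl, zero_add, smul_smul, smul_smul, ← sub_smul]
      have h1 : x nn ^ p * C 0 - lam * x 0 = 1 := by rw [mul_comm]; exact hx0
      rw [h1, one_smul, Pit_zero]
    · obtain ⟨j, rfl⟩ : ∃ j, i = j + 1 := ⟨i - 1, (Nat.succ_pred_eq_of_pos hipos).symm⟩
      have hj : j + 1 < nn + 1 := Finset.mem_range.1 hi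
      rw [if_neg (Nat.succ_ne_zero j), if_neg (Nat.succ_ne_zero j), Nat.add_sub_cancel,
        smul_smul, smul_smul, ← add_smul, ← sub_smul]
      have : x j ^ p + x nn ^ p * C (j + 1) - lam * x (j + 1) = 0 := by
        rw [mul_comm (x nn ^ p)]; exact hxi j hj
      rw [this, zero_smul]
  rw [Finset.sum_congr rfl this, Finset.sum_ite_eq' (Finset.range (nn + 1)) 0 (fun _ => v),
    if_pos (Finset.mem_range.2 (Nat.succ_pos nn))]

/-- Existence of solutions to `pMap r - lam • r = v` when `pMap` is injective
(the torus case), over an algebraically closed field. -/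
lemma exists_AS [FiniteDimensional k V] [IsAlgClosed k]
    (hT : ∀ a : V, AbRes.pMap (p := p) (k := k) a = 0 → a = 0)
    (lam : k) (v : V) :
    ∃ r : V, AbRes.pMap (p := p) (k := k) r - lam • r = v := by
  classical
  rcases eq_or_ne v 0 with rfl | hv
  · exact ⟨0, by rw [pMap_zero p k, smul_zero, sub_zero]⟩
  have hppos : 0 < p := (Fact.out : Nat.Prime p).pos
  have hp1 : 1 < p := (Fact.out : Nat.Prime p).one_lt
  -- the chain of spans of iterates
  set W : ℕ → Submodule k V :=
    fun m => Submodule.span k (Set.range fun i : Fin m => Pit p k v i) with hW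
  have hex : ∃ m, Pit p k v m ∈ W m := by
    by_contra hQ
    push_neg at hQ
    have hstep : ∀ m, W m < W (m + 1) := by
      intro m
      have hle : W m ≤ W (m + 1) := Submodule.span_mono (by
        rintro _ ⟨i, rfl⟩
        exact ⟨i.castSucc, rfl⟩)
      refine lt_of_le_of_ne hle fun h => hQ m ?_
      rw [h]
      exact Submodule.subset_span ⟨Fin.last m, rfl⟩
    have hrank : ∀ m, m ≤ Module.finrank k (W m) := by
      intro m
      induction m with
      | zero => exact Nat.zero_le _
      | succ m ih => exact lt_of_le_of_lt ih (Submodule.finrank_lt_finrank_of_lt (hstep m))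
    have h1 := hrank (Module.finrank k V + 1)
    have h2 := Submodule.finrank_le (W (Module.finrank k V + 1))
    omega
  obtain ⟨m, hQm, hmin⟩ : ∃ m, Pit p k v m ∈ W m ∧ ∀ j, j < m → Pit p k v j ∉ W j :=
    ⟨Nat.find hex, Nat.find_spec hex, fun j hj => Nat.find_min hex hj⟩
  have hm1 : 1 ≤ m := by
    rcases Nat.eq_zero_or_pos m with h0 | h
    · exfalso
      have h2 : Pit p k v 0 ∈ W 0 := h0 ▸ hQm
      have hW0 : W 0 = ⊥ := by
        show Submodule.span k (Set.range fun i : Fin 0 => Pit p k v ↑i) = ⊥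
        rw [Set.range_eq_empty, Submodule.span_empty]
      rw [hW0, Submodule.mem_bot] at h2
      exact hv h2
    · exact h
  obtain ⟨n, rfl⟩ : ∃ n, m = n + 1 := ⟨m - 1, (Nat.succ_pred_eq_of_pos hm1).symm⟩
  obtain ⟨cc, hcc⟩ := (Submodule.mem_span_range_iff_exists_fun k).1 hQm
  set C : ℕ → k := fun i => if h : i < n + 1 then cc ⟨i, h⟩ else 0 with hCdef
  have hrel : ∑ i ∈ Finset.range (n + 1), C i • Pit p k v i = Pit p k v (n + 1) := by
    rw [← hcc, ← Fin.sum_univ_eq_sum_range (fun i => C i • Pit p k v i) (n + 1)]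
    refine Finset.sum_congr rfl fun i _ => ?_
    rw [hCdef]
    simp [i.isLt]
  -- p-th roots
  have hroot : ∀ c : k, ∃ d : k, d ^ p = c := fun c =>
    IsAlgClosed.exists_pow_nat_eq c hppos
  choose D hD using hroot
  have hC0 : C 0 ≠ 0 := by
    intro hC0
    refine hmin n (Nat.lt_succ_self n) ?_
    have hw : Pit p k v n = ∑ j ∈ Finset.range n, D (C (j + 1)) • Pit p k v j := by
      have hPw : AbRes.pMap (p := p) (k := k)
          (Pit p k v n - ∑ j ∈ Finset.range n, D (C (j + 1)) • Pit p k v j) = 0 := by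
        rw [pMap_sub p k, ← Pit_succ p k v n, pMap_sum p k]
        have hs : ∑ j ∈ Finset.range n, D (C (j + 1)) ^ p
              • AbRes.pMap (p := p) (k := k) (Pit p k v j)
            = ∑ j ∈ Finset.range n, C (j + 1) • Pit p k v (j + 1) := by
          refine Finset.sum_congr rfl fun j _ => ?_
          rw [hD, Pit_succ]
        rw [hs, ← hrel,
          Finset.sum_range_succ' (fun i => C i • Pit p k v i) n, hC0, zero_smul, add_zero,
          sub_self]
      have := hT _ hPw
      rw [sub_eq_zero] at this
      exact this
    rw [hw]
    refine Submodule.sum_mem _ fun j hj => Submodule.smul_mem _ _ ?_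
    have hj' := Finset.mem_range.1 hj
    exact Submodule.subset_span ⟨⟨j, hj'⟩, rfl⟩
  -- now construct the coefficients x
  rcases eq_or_ne lam 0 with rfl | hlam0
  · -- lam = 0 : take p-th roots directly
    set x : ℕ → k := fun i => if i = n then D (C 0)⁻¹ else D (-(C (i + 1)) * (D (C 0)⁻¹) ^ p)
      with hxdef
    have hxn : x n = D (C 0)⁻¹ := by rw [hxdef]; simp
    refine solve p k 0 v (n + 1) (Nat.le_add_left 1 n) C x hrel ?_ ?_
    · show C 0 * x (n + 1 - 1) ^ p - 0 * x 0 = 1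
      rw [Nat.add_sub_cancel, hxn, hD, zero_mul, sub_zero, mul_inv_cancel₀ hC0]
    · intro i hi
      have hin : i ≠ n := by omega
      show x i ^ p + C (i + 1) * x (n + 1 - 1) ^ p - 0 * x (i + 1) = 0
      rw [Nat.add_sub_cancel, hxn, zero_mul, sub_zero, hxdef]
      simp only [if_neg hin]
      rw [hD]
      ring
  · -- lam ≠ 0 : polynomial equation
    set q : ℕ → Polynomial k := fun i => Nat.rec
      (Polynomial.C (lam⁻¹ * C 0) * Polynomial.X ^ p - Polynomial.C lam⁻¹)
      (fun j qj => Polynomial.C lam⁻¹ * (qj ^ p + Polynomial.C (C (j + 1)) * Polynomial.X ^ p)) i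
      with hq
    have hq0 : q 0 = Polynomial.C (lam⁻¹ * C 0) * Polynomial.X ^ p - Polynomial.C lam⁻¹ := rfl
    have hqs : ∀ j, q (j + 1)
        = Polynomial.C lam⁻¹ * (q j ^ p + Polynomial.C (C (j + 1)) * Polynomial.X ^ p) :=
      fun j => rfl
    have hdeg : ∀ i, (q i).natDegree = p ^ (i + 1) := by
      intro i
      induction i with
      | zero =>
          rw [hq0, pow_one]
          have ha : lam⁻¹ * C 0 ≠ 0 := mul_ne_zero (inv_ne_zero hlam0) hC0
          rw [Polynomial.natDegree_sub_eq_left_of_natDegree_lt, Polynomial.natDegree_C_mul ha,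
            Polynomial.natDegree_X_pow]
          rw [Polynomial.natDegree_C_mul ha, Polynomial.natDegree_X_pow, Polynomial.natDegree_C]
          omega
      | succ i ih =>
          have hqine : q i ≠ 0 := fun h => by
            rw [h, Polynomial.natDegree_zero] at ih
            exact (pow_pos hppos (i + 1)).ne' ih.symm
          have hpow : (q i ^ p).natDegree = p ^ (i + 2) := by
            rw [Polynomial.natDegree_pow'
              (pow_ne_zero _ (Polynomial.leadingCoeff_ne_zero.2 hqine)), ih]
            ring
          have hle' : (Polynomial.C (C (i + 1)) * Polynomial.X ^ p).natDegree ≤ p := by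
            refine Polynomial.natDegree_mul_le.trans ?_
            rw [Polynomial.natDegree_C, Polynomial.natDegree_X_pow, zero_add]
          have hlt : (Polynomial.C (C (i + 1)) * Polynomial.X ^ p).natDegree
              < (q i ^ p).natDegree := by
            refine lt_of_le_of_lt hle' ?_
            rw [hpow]
            calc p = p ^ 1 := (pow_one p).symm
              _ < p ^ (i + 2) := Nat.pow_lt_pow_right hp1 (by omega)
          rw [hqs, Polynomial.natDegree_C_mul (inv_ne_zero hlam0),
            Polynomial.natDegree_add_eq_left_of_natDegree_lt hlt, hpow]
    -- find a root of q n - X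
    have hdegn : (q n - Polynomial.X).natDegree = p ^ (n + 1) := by
      rw [Polynomial.natDegree_sub_eq_left_of_natDegree_lt, hdeg]
      rw [hdeg, Polynomial.natDegree_X]
      exact lt_of_lt_of_le hp1 (Nat.le_self_pow (by omega) p)
    have hne : q n - Polynomial.X ≠ 0 := by
      intro h
      rw [h, Polynomial.natDegree_zero] at hdegn
      exact (pow_pos hppos (n + 1)).ne' hdegn.symm
    have hdne : (q n - Polynomial.X).degree ≠ 0 := by
      rw [Polynomial.degree_eq_natDegree hne, hdegn]
      exact_mod_cast (pow_pos hppos (n + 1)).ne'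
    obtain ⟨t, ht⟩ := IsAlgClosed.exists_root _ hdne
    have htn : (q n).eval t = t := by
      have := ht
      rw [Polynomial.IsRoot, Polynomial.eval_sub, Polynomial.eval_X, sub_eq_zero] at this
      exact this
    set x : ℕ → k := fun i => (q i).eval t with hxdef
    have hx0 : x 0 = lam⁻¹ * C 0 * t ^ p - lam⁻¹ := by
      rw [hxdef]
      simp [hq0]
    have hxsucc : ∀ j, x (j + 1) = lam⁻¹ * (x j ^ p + C (j + 1) * t ^ p) := by
      intro j
      rw [hxdef]
      simp [hqs j]
    have hxn : x n = t := htn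
    refine solve p k lam v (n + 1) (Nat.le_add_left 1 n) C x hrel ?_ ?_
    · show C 0 * x (n + 1 - 1) ^ p - lam * x 0 = 1
      rw [Nat.add_sub_cancel, hxn, hx0]
      field_simp
      ring
    · intro i hi
      show x i ^ p + C (i + 1) * x (n + 1 - 1) ^ p - lam * x (i + 1) = 0
      rw [Nat.add_sub_cancel, hxn, hxsucc i]
      field_simp
      ring

end PDAux


open PD in
/-- Let `T = (g, h, ρ)` be an abelian type.  If either (i) `h` is a torus
(no nonzero `x` with `x^{[p]} = 0`), or (ii) `h` is `p`-nilpotent (every element is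
annihilated by some iterate of the restricted map) and `g` is a torus, then `T` is
permissible. -/
theorem permissible_of_torus_or_pnilpotent
    (p n : ℕ) [Fact (Nat.Prime p)] (k : Type) [Field k] [CharP k p] [IsAlgClosed k]
    (G V : Type) [AddCommGroup G] [Module k G] [AddCommGroup V] [Module k V]
    [AbRes p k G] [AbRes p k V]
    (ρ : G →ₗ[k] Module.End k V) (hrep : IsAlgebraicRep p k ρ)
    (hg : Module.finrank k G = 1) (hh : Module.finrank k V = n) (hn : 1 ≤ n)
    (hcase :
      (∀ a : V, AbRes.pMap (p := p) (k := k) a = 0 → a = 0) ∨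
      ((∀ a : V, ∃ m : ℕ, (fun v : V => AbRes.pMap (p := p) (k := k) v)^[m] a = 0) ∧
        (∀ x : G, AbRes.pMap (p := p) (k := k) x = 0 → x = 0)))
    (z : G) (hz : Submodule.span k {z} = ⊤) (hz0 : z ≠ 0)
    (lam : k) (hlam : AbRes.pMap (p := p) (k := k) z = lam • z) :
    Permissible p k V lam (ρ z) := by
  classical
  have hp2 : 2 ≤ p := (Fact.out : Nat.Prime p).two_le
  have hfin : FiniteDimensional k V := FiniteDimensional.of_finrank_pos (by omega)
  rcases hcase with hT | ⟨hnil, hGtor⟩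
  · -- Case (i): `h` is a torus
    have hsurj : ∀ w : V, ∃ b : V, AbRes.pMap (p := p) (k := k) b = w := by
      intro w
      obtain ⟨r, hr⟩ := PDAux.exists_AS p k hT 0 w
      exact ⟨r, by rwa [zero_smul, sub_zero] at hr⟩
    have hf0 : ρ z = 0 := by
      ext a
      obtain ⟨b, rfl⟩ := hsurj a
      simpa using hrep.annih z b
    rw [hf0]
    unfold Permissible
    have hPhi : ∀ r : V, PhiV p k V lam (0 : Module.End k V) r
        = AbRes.pMap (p := p) (k := k) r - lam • r := by
      intro r
      unfold PhiV
      rw [zero_pow (by omega : p - 1 ≠ 0), LinearMap.zero_apply, add_zero]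
    ext w
    constructor
    · intro _
      obtain ⟨r, hr⟩ := PDAux.exists_AS p k hT lam w
      exact ⟨r, by rw [hPhi r]; exact hr⟩
    · intro _
      show (0 : Module.End k V) w = 0
      rw [LinearMap.zero_apply]
  · -- Case (ii): `h` is p-nilpotent and `g` is a torus
    have hlam0 : lam ≠ 0 := by
      intro h
      apply hz0
      apply hGtor z
      rw [hlam, h, zero_smul]
    unfold Permissible
    ext w
    constructor
    · intro hw
      have hfw : ρ z w = 0 := hw
      obtain ⟨M, hM⟩ := hnil w
      have hM' : PDAux.Pit p k w M = 0 := hM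
      set c : ℕ → k := fun i => Nat.rec (-lam⁻¹) (fun _ ci => lam⁻¹ * ci ^ p) i with hc
      have hc0 : c 0 = -lam⁻¹ := rfl
      have hcs : ∀ i, c (i + 1) = lam⁻¹ * c i ^ p := fun i => rfl
      have hkey : ∀ i, c i ^ p = lam * c (i + 1) := by
        intro i
        rw [hcs i, ← mul_assoc, mul_inv_cancel₀ hlam0, one_mul]
      set r : V := ∑ i ∈ Finset.range M, c i • PDAux.Pit p k w i with hr
      have hfr : ρ z r = 0 := by
        rw [hr, map_sum]
        refine Finset.sum_eq_zero fun i _ => ?_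
        rw [map_smul]
        rcases Nat.eq_zero_or_pos i with rfl | hi
        · rw [PDAux.Pit_zero, hfw, smul_zero]
        · obtain ⟨j, rfl⟩ : ∃ j, i = j + 1 := ⟨i - 1, (Nat.succ_pred_eq_of_pos hi).symm⟩
          rw [PDAux.Pit_succ, hrep.annih z _, smul_zero]
      refine ⟨r, ?_⟩
      unfold PhiV
      have hpow0 : ((ρ z) ^ (p - 1)) r = 0 := by
        obtain ⟨s, hs⟩ : ∃ s, p - 1 = s + 1 := ⟨p - 2, by omega⟩
        rw [hs, pow_succ, Module.End.mul_apply, hfr, map_zero]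
      rw [hpow0, add_zero, hr, PDAux.pMap_sum p k, Finset.smul_sum]
      have hterm : ∀ i ∈ Finset.range M,
          (c i ^ p) • AbRes.pMap (p := p) (k := k) (PDAux.Pit p k w i)
              - lam • (c i • PDAux.Pit p k w i)
            = (lam * c (i + 1)) • PDAux.Pit p k w (i + 1)
              - (lam * c i) • PDAux.Pit p k w i := by
        intro i _
        rw [← PDAux.Pit_succ, ← hkey i, smul_smul]
      rw [← Finset.sum_sub_distrib, Finset.sum_congr rfl hterm,
        Finset.sum_range_sub (fun i => (lam * c i) • PDAux.Pit p k w i) M, hM', smul_zero,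
        hc0, mul_neg, mul_inv_cancel₀ hlam0, zero_sub, neg_smul, one_smul, neg_neg]
      exact PDAux.Pit_zero p k w
    · rintro ⟨r, rfl⟩
      show ρ z (PhiV p k V lam (ρ z) r) = 0
      unfold PhiV
      rw [map_add, map_sub, map_smul, hrep.annih z r]
      have hfp : (ρ z) (((ρ z) ^ (p - 1)) r) = lam • (ρ z) r := by
        have h1 : ρ z * ρ z ^ (p - 1) = ρ z ^ p := by
          rw [← pow_succ']
          congr 1
          omega
        have h2 : (ρ z) (((ρ z) ^ (p - 1)) r) = ((ρ z) ^ p) r := by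
          rw [← Module.End.mul_apply, h1]
        rw [h2, ← hrep.map_pMap z, hlam, map_smul, LinearMap.smul_apply]
      rw [hfp, zero_sub, neg_add_cancel]
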